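/- arXiv:2106.09519 — 2 statements merged into one kernel-verified Lean document; each statement's English description precedes it below -/
import Mathlib

section
/- Let R be a G-graded commutative ring and r a homogeneous element of R. The basic open set GX_r^{qp.R} = q.Spec_g(R) − qp-V_R^g(Rr) is empty if and only if r is nilpotent. -/
/-- The graded radical `Gr(I)` of an ideal `I` of a `G`-graded commutative ring:
the set of all `r` such that every homogeneous component of `r` has some positive
power in `I`. -/
def gradedRadical {G R : Type*} [AddGroup G] [DecidableEq G] [CommRing R]
    (𝒜 : G → AddSubgroup R) [GradedRing 𝒜] (I : Ideal R) : Set R :=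
  {r : R | ∀ g : G, ∃ n : ℕ, 0 < n ∧ (DirectSum.decompose 𝒜 r g : R) ^ n ∈ I}

/-- An ideal is graded if it contains the homogeneous components of all its elements. -/
def IsGradedIdeal {G R : Type*} [AddGroup G] [DecidableEq G] [CommRing R]
    (𝒜 : G → AddSubgroup R) [GradedRing 𝒜] (I : Ideal R) : Prop :=
  ∀ (g : G) ⦃r : R⦄, r ∈ I → (DirectSum.decompose 𝒜 r g : R) ∈ I

/-- A graded prime ideal: a proper graded ideal such that `r * s ∈ P` for homogeneous
`r, s` implies `r ∈ P` or `s ∈ P`. -/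
def IsGradedPrimeIdeal {G R : Type*} [AddGroup G] [DecidableEq G] [CommRing R]
    (𝒜 : G → AddSubgroup R) [GradedRing 𝒜] (P : Ideal R) : Prop :=
  P ≠ ⊤ ∧ IsGradedIdeal 𝒜 P ∧
    ∀ ⦃r s : R⦄, SetLike.IsHomogeneousElem 𝒜 r → SetLike.IsHomogeneousElem 𝒜 s →
      r * s ∈ P → r ∈ P ∨ s ∈ P

/-- A graded quasi-primary ideal: a proper graded ideal such that `a * b ∈ q` for
homogeneous `a, b` implies `a ∈ Gr(q)` or `b ∈ Gr(q)`. -/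
def IsGradedQuasiPrimaryIdeal {G R : Type*} [AddGroup G] [DecidableEq G] [CommRing R]
    (𝒜 : G → AddSubgroup R) [GradedRing 𝒜] (q : Ideal R) : Prop :=
  q ≠ ⊤ ∧ IsGradedIdeal 𝒜 q ∧
    ∀ ⦃a b : R⦄, SetLike.IsHomogeneousElem 𝒜 a → SetLike.IsHomogeneousElem 𝒜 b →
      a * b ∈ q → a ∈ gradedRadical 𝒜 q ∨ b ∈ gradedRadical 𝒜 q

/-- The graded quasi-primary spectrum of `R`: the set of all graded quasi-primary ideals. -/
def qpSpecR {G R : Type*} [AddGroup G] [DecidableEq G] [CommRing R]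
    (𝒜 : G → AddSubgroup R) [GradedRing 𝒜] : Set (Ideal R) :=
  {q : Ideal R | IsGradedQuasiPrimaryIdeal 𝒜 q}

/-- The variety `qp-V_R^g(I) = { q ∈ q.Spec_g(R) : Gr(q) ⊇ I }`. -/
def qpVR {G R : Type*} [AddGroup G] [DecidableEq G] [CommRing R]
    (𝒜 : G → AddSubgroup R) [GradedRing 𝒜] (I : Ideal R) : Set (qpSpecR 𝒜) :=
  {q : qpSpecR 𝒜 | (I : Set R) ⊆ gradedRadical 𝒜 q.1}

/-- The quasi-Zariski topology on `q.Spec_g(R)`, generated by the complements of the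
varieties of graded ideals. -/
def qpZariskiR {G R : Type*} [AddGroup G] [DecidableEq G] [CommRing R]
    (𝒜 : G → AddSubgroup R) [GradedRing 𝒜] : TopologicalSpace (qpSpecR 𝒜) :=
  TopologicalSpace.generateFrom
    {U : Set (qpSpecR 𝒜) | ∃ I : Ideal R, IsGradedIdeal 𝒜 I ∧ U = (qpVR 𝒜 I)ᶜ}

/-- The basic open set `GX_r^{qp.R}` is empty iff the homogeneous element `r` is
nilpotent. -/
theorem gx_eq_empty_iff_isNilpotent {G R : Type*} [AddGroup G] [DecidableEq G]
    [CommRing R] (𝒜 : G → AddSubgroup R) [GradedRing 𝒜]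
    (r : R) (hr : SetLike.IsHomogeneousElem 𝒜 r) :
    (qpVR 𝒜 (Ideal.span {r}))ᶜ = (∅ : Set (qpSpecR 𝒜)) ↔ IsNilpotent r := by
  constructor
  · intro hempty
    by_contra hnil
    -- `r` is not nilpotent, so there is a prime `J` with `r ∉ J`
    have hr_not : r ∉ nilradical R := by
      simpa [mem_nilradical] using hnil
    rw [nilradical_eq_sInf, Submodule.mem_sInf] at hr_not
    push_neg at hr_not
    obtain ⟨J, hJprime, hrJ⟩ := hr_not
    obtain ⟨d, hd⟩ := hr
    -- the homogeneous core of `J`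
    set P : Ideal R := (Ideal.homogeneousCore 𝒜 J).toIdeal with hP
    have hPle : P ≤ J := Ideal.toIdeal_homogeneousCore_le 𝒜 J
    have hPgraded : IsGradedIdeal 𝒜 P := (Ideal.homogeneousCore 𝒜 J).isHomogeneous
    have hPqp : IsGradedQuasiPrimaryIdeal 𝒜 P := by
      refine ⟨?_, hPgraded, ?_⟩
      · intro h
        exact hJprime.ne_top (top_le_iff.mp (h ▸ hPle))
      · intro a b ha hb hab
        have hmem : a * b ∈ J := hPle hab
        rcases hJprime.mem_or_mem hmem with h | h
        · left
          intro g
          exact ⟨1, one_pos, by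
            simpa using hPgraded g (Ideal.mem_homogeneousCore_of_homogeneous_of_mem ha h)⟩
        · right
          intro g
          exact ⟨1, one_pos, by
            simpa using hPgraded g (Ideal.mem_homogeneousCore_of_homogeneous_of_mem hb h)⟩
    have hPmem : (⟨P, hPqp⟩ : qpSpecR 𝒜) ∈ qpVR 𝒜 (Ideal.span {r}) := by
      rw [Set.compl_empty_iff] at hempty
      rw [hempty]; trivial
    have hrmem : r ∈ gradedRadical 𝒜 P :=
      hPmem (Ideal.subset_span (Set.mem_singleton r))
    obtain ⟨n, hn, hpow⟩ := hrmem d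
    rw [DirectSum.decompose_of_mem_same 𝒜 hd] at hpow
    exact hrJ (hJprime.mem_of_pow_mem n (hPle hpow))
  · intro ⟨n, hn⟩
    rw [Set.compl_empty_iff, Set.eq_univ_iff_forall]
    rintro ⟨q, hq⟩ s hs
    obtain ⟨c, rfl⟩ := Ideal.mem_span_singleton'.mp hs
    obtain ⟨d, hd⟩ := hr
    intro g
    refine ⟨n + 1, Nat.succ_pos n, ?_⟩
    have hdec : (DirectSum.decompose 𝒜 (c * r) g : R) =
        (DirectSum.decompose 𝒜 c (g - d) : R) * r := by
      have := DirectSum.coe_decompose_mul_add_of_right_mem 𝒜 (i := g - d) hd (a := c)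
      rwa [sub_add_cancel] at this
    rw [hdec, mul_pow]
    have : r ^ (n + 1) = 0 := by rw [pow_succ, hn, zero_mul]
    rw [this, mul_zero]
    exact q.zero_mem
end

section
/- Let R be a G-graded commutative ring and I, J graded ideals of R. Then GX^{qp.R}(I) = GX^{qp.R}(J) if and only if Gr(I) = Gr(J). -/
section Aux

variable {G R : Type*} [AddGroup G] [DecidableEq G] [CommRing R]
  (𝒜 : G → AddSubgroup R) [GradedRing 𝒜]

lemma homogeneous_decompose (r : R) (g : G) :
    SetLike.IsHomogeneousElem 𝒜 (DirectSum.decompose 𝒜 r g : R) :=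
  ⟨g, SetLike.coe_mem _⟩

lemma homogeneous_pow {x : R} (hx : SetLike.IsHomogeneousElem 𝒜 x) (n : ℕ) :
    SetLike.IsHomogeneousElem 𝒜 (x ^ n) := by
  obtain ⟨d, hd⟩ := hx
  exact ⟨n • d, SetLike.pow_mem_graded n hd⟩

lemma subset_gradedRadical {I : Ideal R} (hI : IsGradedIdeal 𝒜 I) :
    (I : Set R) ⊆ gradedRadical 𝒜 I := fun r hr g =>
  ⟨1, one_pos, by simpa using hI g hr⟩

lemma homogeneous_mem_gradedRadical_iff {I : Ideal R} {x : R}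
    (hx : SetLike.IsHomogeneousElem 𝒜 x) :
    x ∈ gradedRadical 𝒜 I ↔ ∃ n : ℕ, 0 < n ∧ x ^ n ∈ I := by
  obtain ⟨d, hd⟩ := hx
  constructor
  · intro h
    obtain ⟨n, hn, hm⟩ := h d
    rw [DirectSum.decompose_of_mem_same 𝒜 hd] at hm
    exact ⟨n, hn, hm⟩
  · rintro ⟨n, hn, hm⟩ g
    by_cases hg : g = d
    · subst hg
      rw [DirectSum.decompose_of_mem_same 𝒜 hd]
      exact ⟨n, hn, hm⟩
    · rw [DirectSum.decompose_of_mem_ne 𝒜 hd (Ne.symm hg)]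
      exact ⟨1, one_pos, by simp⟩

lemma gradedRadical_subset_of_subset {I q : Ideal R}
    (h : (I : Set R) ⊆ gradedRadical 𝒜 q) :
    gradedRadical 𝒜 I ⊆ gradedRadical 𝒜 q := by
  intro r hr g
  obtain ⟨n, hn, hm⟩ := hr g
  set x : R := (DirectSum.decompose 𝒜 r g : R) with hxdef
  have hx : SetLike.IsHomogeneousElem 𝒜 x := homogeneous_decompose 𝒜 r g
  have hxn : x ^ n ∈ gradedRadical 𝒜 q := h hm
  obtain ⟨m, hm', hq⟩ :=
    (homogeneous_mem_gradedRadical_iff 𝒜 (homogeneous_pow 𝒜 hx n)).1 hxn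
  exact ⟨n * m, Nat.mul_pos hn hm', by rwa [pow_mul]⟩

lemma mem_of_pow_mem_gradedPrime {P : Ideal R} (hP : IsGradedPrimeIdeal 𝒜 P)
    {x : R} (hx : SetLike.IsHomogeneousElem 𝒜 x) :
    ∀ n : ℕ, 0 < n → x ^ n ∈ P → x ∈ P := by
  intro n
  induction n with
  | zero => intro h; exact absurd h (lt_irrefl 0)
  | succ n ih =>
    intro _ h
    rcases Nat.eq_zero_or_pos n with hn0 | hn0
    · subst hn0; simpa using h
    · rw [pow_succ] at h
      rcases hP.2.2 (homogeneous_pow 𝒜 hx n) hx h with h1 | h2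
      · exact ih hn0 h1
      · exact h2

lemma gradedRadical_of_gradedPrime {P : Ideal R} (hP : IsGradedPrimeIdeal 𝒜 P) :
    gradedRadical 𝒜 P = (P : Set R) := by
  apply subset_antisymm
  · intro r hr
    have hcomp : ∀ g : G, (DirectSum.decompose 𝒜 r g : R) ∈ P := by
      intro g
      obtain ⟨n, hn, hm⟩ := hr g
      exact mem_of_pow_mem_gradedPrime 𝒜 hP (homogeneous_decompose 𝒜 r g) n hn hm
    have : r ∈ P := by
      classical
      rw [← DirectSum.sum_support_decompose 𝒜 r]
      exact Ideal.sum_mem _ fun g _ => hcomp g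
    exact this
  · exact subset_gradedRadical 𝒜 hP.2.1

lemma isGradedIdeal_sup {P K : Ideal R} (hP : IsGradedIdeal 𝒜 P)
    (hK : IsGradedIdeal 𝒜 K) : IsGradedIdeal 𝒜 (P ⊔ K) := by
  intro g r hr
  obtain ⟨p, hp, k, hk, rfl⟩ := Submodule.mem_sup.1 hr
  rw [DirectSum.decompose_add, DirectSum.add_apply]
  push_cast
  exact Submodule.add_mem_sup (hP g hp) (hK g hk)

lemma isGradedIdeal_span_singleton {a : R} (ha : SetLike.IsHomogeneousElem 𝒜 a) :
    IsGradedIdeal 𝒜 (Ideal.span {a}) := by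
  have := Ideal.homogeneous_span 𝒜 {a} (by rintro x rfl; exact ha)
  exact this

/-- Existence of a graded prime containing a graded ideal and avoiding all positive
powers of a homogeneous element. -/
lemma exists_gradedPrime {J : Ideal R} (hJ : IsGradedIdeal 𝒜 J) {x : R}
    (hx : SetLike.IsHomogeneousElem 𝒜 x) (hpow : ∀ n : ℕ, 0 < n → x ^ n ∉ J) :
    ∃ P : Ideal R, IsGradedPrimeIdeal 𝒜 P ∧ J ≤ P ∧ x ∉ P := by
  set S : Set (Ideal R) :=
    {K | J ≤ K ∧ IsGradedIdeal 𝒜 K ∧ ∀ n : ℕ, 0 < n → x ^ n ∉ K} with hS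
  have hJS : J ∈ S := ⟨le_rfl, hJ, hpow⟩
  have hchain : ∀ c ⊆ S, IsChain (· ≤ ·) c → ∀ y ∈ c, ∃ ub ∈ S, ∀ z ∈ c, z ≤ ub := by
    intro c hcS hc y hy
    refine ⟨sSup c, ?_, fun z hz => le_sSup hz⟩
    have hcne : c.Nonempty := ⟨y, hy⟩
    have hdir : DirectedOn (· ≤ ·) c := hc.directedOn
    have hmem : ∀ {r : R}, r ∈ sSup c → ∃ K ∈ c, r ∈ K := fun hr =>
      (Submodule.mem_sSup_of_directed hcne hdir).1 hr
    refine ⟨le_trans (hcS hy).1 (le_sSup hy), ?_, ?_⟩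
    · intro g r hr
      obtain ⟨K, hKc, hrK⟩ := hmem hr
      exact le_sSup hKc ((hcS hKc).2.1 g hrK)
    · intro n hn hxn
      obtain ⟨K, hKc, hxK⟩ := hmem hxn
      exact (hcS hKc).2.2 n hn hxK
  obtain ⟨P, hJP, hPmax⟩ := zorn_le_nonempty₀ S hchain J hJS
  obtain ⟨hJleP, hPgr, hPavoid⟩ := hPmax.1
  have hkey : ∀ a : R, SetLike.IsHomogeneousElem 𝒜 a → a ∉ P →
      ∃ n : ℕ, 0 < n ∧ x ^ n ∈ P ⊔ Ideal.span {a} := by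
    intro a ha haP
    by_contra hcon
    push_neg at hcon
    have hPS : P ⊔ Ideal.span {a} ∈ S :=
      ⟨le_trans hJleP le_sup_left,
       isGradedIdeal_sup 𝒜 hPgr (isGradedIdeal_span_singleton 𝒜 ha),
       fun n hn hxn => (hcon n hn) hxn⟩
    have := hPmax.2 hPS le_sup_left
    have haPP : a ∈ P ⊔ Ideal.span {a} :=
      (le_sup_right : Ideal.span {a} ≤ P ⊔ Ideal.span {a}) (Ideal.subset_span rfl)
    exact haP (this haPP)
  refine ⟨P, ⟨?_, hPgr, ?_⟩, hJleP, fun hxP => hPavoid 1 one_pos (by simpa using hxP)⟩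
  · intro htop
    exact hPavoid 1 one_pos (htop ▸ trivial)
  · intro a b ha hb hab
    by_contra hcon
    push_neg at hcon
    obtain ⟨haP, hbP⟩ := hcon
    obtain ⟨n, hn, hxn⟩ := hkey a ha haP
    obtain ⟨m, hm, hxm⟩ := hkey b hb hbP
    obtain ⟨p, hp, za, hza, hpa⟩ := Submodule.mem_sup.1 hxn
    obtain ⟨q, hq, zb, hzb, hqb⟩ := Submodule.mem_sup.1 hxm
    obtain ⟨r, hr⟩ := Ideal.mem_span_singleton'.1 hza
    obtain ⟨s, hs⟩ := Ideal.mem_span_singleton'.1 hzb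
    have hprod : x ^ (n + m) ∈ P := by
      have : x ^ (n + m) = p * q + p * (s * b) + (r * a) * q + (r * s) * (a * b) := by
        rw [pow_add, ← hpa, ← hqb, ← hr, ← hs]; ring
      rw [this]
      exact Ideal.add_mem _ (Ideal.add_mem _ (Ideal.add_mem _
        (Ideal.mul_mem_right _ _ hp) (Ideal.mul_mem_right _ _ hp))
        (Ideal.mul_mem_left _ _ hq)) (Ideal.mul_mem_left _ _ hab)
    exact hPavoid (n + m) (by omega) hprod

end Aux

/-- For graded ideals `I` and `J`, `GX^{qp.R}(I) = GX^{qp.R}(J)` iff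
`Gr(I) = Gr(J)`. -/
theorem gx_eq_gx_iff_gradedRadical_eq {G R : Type*} [AddGroup G] [DecidableEq G]
    [CommRing R] (𝒜 : G → AddSubgroup R) [GradedRing 𝒜]
    (I J : Ideal R) (hI : IsGradedIdeal 𝒜 I) (hJ : IsGradedIdeal 𝒜 J) :
    (qpVR 𝒜 I)ᶜ = (qpVR 𝒜 J)ᶜ ↔ gradedRadical 𝒜 I = gradedRadical 𝒜 J := by
  rw [compl_inj_iff]
  constructor
  · intro hV
    have key : ∀ (A B : Ideal R), IsGradedIdeal 𝒜 A → IsGradedIdeal 𝒜 B →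
        qpVR 𝒜 A = qpVR 𝒜 B → gradedRadical 𝒜 A ⊆ gradedRadical 𝒜 B := by
      intro A B hA hB hAB r hr g
      by_contra hcon
      push_neg at hcon
      set x : R := (DirectSum.decompose 𝒜 r g : R) with hxdef
      have hx : SetLike.IsHomogeneousElem 𝒜 x := homogeneous_decompose 𝒜 r g
      have hpow : ∀ n : ℕ, 0 < n → x ^ n ∉ B := fun n hn h => hcon n hn h
      obtain ⟨P, hPprime, hBP, hxP⟩ := exists_gradedPrime 𝒜 hB hx hpow
      have hPqp : IsGradedQuasiPrimaryIdeal 𝒜 P :=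
        ⟨hPprime.1, hPprime.2.1, fun a b ha hb hab =>
          (hPprime.2.2 ha hb hab).imp
            (fun h => subset_gradedRadical 𝒜 hPprime.2.1 h)
            (fun h => subset_gradedRadical 𝒜 hPprime.2.1 h)⟩
      have hPinB : (⟨P, hPqp⟩ : qpSpecR 𝒜) ∈ qpVR 𝒜 B := by
        intro y hy
        exact subset_gradedRadical 𝒜 hPprime.2.1 (hBP hy)
      have hPinA : (⟨P, hPqp⟩ : qpSpecR 𝒜) ∈ qpVR 𝒜 A := by
        rw [hAB]; exact hPinB
      have hAsub : (A : Set R) ⊆ gradedRadical 𝒜 P := hPinA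
      rw [gradedRadical_of_gradedPrime 𝒜 hPprime] at hAsub
      obtain ⟨n, hn, hxn⟩ := hr g
      exact hxP (mem_of_pow_mem_gradedPrime 𝒜 hPprime hx n hn (hAsub hxn))
    exact subset_antisymm (key I J hI hJ hV) (key J I hJ hI hV.symm)
  · intro hGr
    ext q
    have key : ∀ (A B : Ideal R), IsGradedIdeal 𝒜 A →
        gradedRadical 𝒜 A = gradedRadical 𝒜 B →
        q ∈ qpVR 𝒜 B → q ∈ qpVR 𝒜 A := by
      intro A B hA hrad hq
      have h1 : (A : Set R) ⊆ gradedRadical 𝒜 A := subset_gradedRadical 𝒜 hA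
      have h2 : gradedRadical 𝒜 B ⊆ gradedRadical 𝒜 q.1 :=
        gradedRadical_subset_of_subset 𝒜 hq
      exact fun y hy => h2 (hrad ▸ h1 hy)
    exact ⟨key J I hJ hGr.symm, key I J hI hGr⟩
end
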